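/- For every integer m ≥ 0, 4 ∫_0^1 x^(2+2m)/(1+x^2)^2 dx = 2(2m+1)·|π/4 − ∑_{n=0}^{m−1} (−1)^n/(2n+1)| − 1. -/

import Mathlib

open intervalIntegral Real

noncomputable def Jint (m : ℕ) : ℝ := ∫ x in (0:ℝ)..1, x^(2*m) / (1 + x^2)

lemma cont1 (p : ℕ) : Continuous (fun x : ℝ => x^p / (1 + x^2)) := by
  apply (continuous_pow p).div (by continuity)
  intro x; positivity

lemma cont2 (p : ℕ) : Continuous (fun x : ℝ => x^p / (1 + x^2)^2) := by
  apply (continuous_pow p).div (by continuity)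
  intro x; positivity

lemma int1 (p : ℕ) : IntervalIntegrable (fun x : ℝ => x^p / (1+x^2)) MeasureTheory.volume 0 1 :=
  (cont1 p).intervalIntegrable _ _

lemma int2 (p : ℕ) : IntervalIntegrable (fun x : ℝ => x^p / (1+x^2)^2) MeasureTheory.volume 0 1 :=
  (cont2 p).intervalIntegrable _ _

lemma key (m : ℕ) :
    (∫ x in (0:ℝ)..1,
      (4 * (x^(2+2*m) / (1+x^2)^2) - 2*(2*m+1) * (x^(2*m) / (1+x^2)))) = -1 := by
  have h : ∀ x ∈ Set.uIcc (0:ℝ) 1, HasDerivAt (fun x : ℝ => -2*x^(2*m+1) / (1+x^2))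
      (4 * (x^(2+2*m) / (1+x^2)^2) - 2*(2*m+1) * (x^(2*m) / (1+x^2))) x := by
    intro x _
    have hden : (1 + x^2) ≠ 0 := by positivity
    have h1 : HasDerivAt (fun x : ℝ => -2*x^(2*m+1)) (-2*((2*m+1)*x^(2*m))) x := by
      have := (hasDerivAt_pow (2*m+1) x).const_mul (-2 : ℝ)
      simpa using this
    have h2 : HasDerivAt (fun x : ℝ => 1 + x^2) (2*x) x := by
      have := (hasDerivAt_pow 2 x).const_add (1 : ℝ)
      simpa using this
    have := h1.div h2 hden
    refine this.congr_deriv ?_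
    symm
    rw [eq_div_iff (by positivity)]
    field_simp
    ring
  rw [intervalIntegral.integral_eq_sub_of_hasDerivAt h ?_]
  · norm_num
  · exact ((continuous_const.mul (cont2 (2+2*m))).sub (continuous_const.mul (cont1 (2*m)))).intervalIntegrable _ _

lemma split (m : ℕ) :
    4 * (∫ x in (0:ℝ)..1, x^(2 + 2*m) / (1 + x^2)^2) = 2*(2*m+1) * Jint m - 1 := by
  have h := key m
  rw [intervalIntegral.integral_sub (((int2 (2+2*m)).const_mul 4))
      ((int1 (2*m)).const_mul (2*(2*m+1))),
    intervalIntegral.integral_const_mul, intervalIntegral.integral_const_mul] at h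
  unfold Jint
  linarith

lemma J0 : Jint 0 = Real.pi / 4 := by
  unfold Jint
  simp only [Nat.mul_zero, pow_zero]
  have : (∫ x in (0:ℝ)..1, 1 / (1 + x^2)) = Real.arctan 1 - Real.arctan 0 :=
    integral_one_div_one_add_sq
  rw [this, Real.arctan_one, Real.arctan_zero, sub_zero]

lemma Jrec (m : ℕ) : Jint (m+1) = 1/(2*m+1) - Jint m := by
  unfold Jint
  have h : ∀ x ∈ Set.uIcc (0:ℝ) 1,
      x^(2*(m+1)) / (1+x^2) = x^(2*m) - x^(2*m) / (1+x^2) := by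
    intro x _
    have hden : (1 + x^2) ≠ 0 := by positivity
    field_simp
    ring
  rw [intervalIntegral.integral_congr h,
    intervalIntegral.integral_sub ((continuous_pow (2*m)).intervalIntegrable _ _) (int1 (2*m)),
    integral_pow]
  push_cast
  ring_nf

lemma Jnonneg (m : ℕ) : 0 ≤ Jint m := by
  apply intervalIntegral.integral_nonneg (by norm_num)
  intro x hx
  have h0 := hx.1
  positivity

lemma Jsigned (m : ℕ) :
    Real.pi/4 - ∑ n ∈ Finset.range m, (-1:ℝ)^n / (2*n + 1) = (-1)^m * Jint m := by
  induction m with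
  | zero => simp [J0]
  | succ k ih =>
    rw [Finset.sum_range_succ, Jrec, pow_succ, sub_add_eq_sub_sub, ih]
    ring

theorem stmt_3 (m : ℕ) :
    4 * ∫ x in (0:ℝ)..1, x^(2 + 2*m) / (1 + x^2)^2 =
      2 * (2*m + 1) * |Real.pi/4 - ∑ n ∈ Finset.range m, (-1:ℝ)^n / (2*n + 1)| - 1 := by
  rw [Jsigned, abs_mul, abs_pow, abs_neg, abs_one, one_pow, one_mul,
    abs_of_nonneg (Jnonneg m)]
  have := split m
  push_cast at this ⊢
  linarith
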